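/- Suppose that for a fixed integer s ≥ 2 there is a constant c > 0 such that every graph H with α(H) < s and ω(H) ≤ w (for real w > 1) satisfies |H| < c·w^{s−1}/(log w)^{s−2}. Then for integers s ≥ t ≥ 2, every K_{s,t}-free graph G with ω(G) ≤ w (w > 1 real, c ≥ s) satisfies |G| ≤ c·α(G)^t·w^{s−1}/(log w)^{s−2}. -/

import Mathlib

open SimpleGraph Finset

/-- A stable (independent) set: pairwise nonadjacent vertices. -/
def IsStableSet {V : Type*} (G : SimpleGraph V) (T : Finset V) : Prop :=
  ∀ ⦃u⦄, u ∈ T → ∀ ⦃v⦄, v ∈ T → u ≠ v → ¬G.Adj u v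

/-- `G` is `K_{s,t}`-free. -/
def KstFree {V : Type*} (G : SimpleGraph V) (s t : ℕ) : Prop :=
  ¬ ∃ A B : Finset V, Disjoint A B ∧ A.card = s ∧ B.card = t ∧
      IsStableSet G A ∧ IsStableSet G B ∧ ∀ a ∈ A, ∀ b ∈ B, G.Adj a b

private lemma logb_two_le_self {w : ℝ} (hw : 1 ≤ w) : Real.logb 2 w ≤ w := by
  rw [Real.logb, div_le_iff₀ (Real.log_pos one_lt_two)]
  have hw0 : (0:ℝ) ≤ w := by linarith
  have hs : Real.sqrt w ^ 2 = w := Real.sq_sqrt hw0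
  have hs1 : (1:ℝ) ≤ Real.sqrt w := Real.one_le_sqrt.2 hw
  have hlog : Real.log w = 2 * Real.log (Real.sqrt w) := by
    rw [Real.log_sqrt hw0]; ring
  have h1 : Real.log (Real.sqrt w) ≤ Real.sqrt w - 1 :=
    Real.log_le_sub_one_of_pos (by linarith)
  have h2 : (0.6931471803 : ℝ) < Real.log 2 := Real.log_two_gt_d9
  nlinarith [sq_nonneg (69 * Real.sqrt w - 100), sq_nonneg (Real.sqrt w)]

private lemma choose_sum_le {a : ℕ} (ha : 2 ≤ a) :
    ∀ t : ℕ, 2 ≤ t →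
      a + 2 * ∑ k ∈ Finset.range (t+1), Nat.choose a k ≤ 2 * a ^ t + 2 := by
  intro t ht
  induction t, ht using Nat.le_induction with
  | base =>
    have h2 : 2 * Nat.choose a 2 = a * (a - 1) := by
      rw [Nat.choose_two_right]
      exact Nat.mul_div_cancel' (Nat.even_mul_pred_self a).two_dvd
    have h3 : a * (a - 1) + a = a * a := by
      obtain ⟨b, rfl⟩ : ∃ b, a = b + 2 := ⟨a - 2, by omega⟩
      have hb : b + 2 - 1 = b + 1 := by omega
      rw [hb]; ring
    have h4 : 2 * Nat.choose a 2 + a = a * a := by rw [h2]; exact h3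
    rw [Finset.sum_range_succ, Finset.sum_range_succ, Finset.sum_range_succ,
      Finset.sum_range_zero, Nat.choose_zero_right, Nat.choose_one_right, pow_two]
    have haa : 2 * a ≤ a * a := Nat.mul_le_mul ha (le_refl a)
    linarith [h4, haa]
  | succ n hn ih =>
    rw [Finset.sum_range_succ]
    have hC : 2 * Nat.choose a (n+1) ≤ a ^ (n+1) := by
      have h1 : Nat.factorial (n+1) * Nat.choose a (n+1) = a.descFactorial (n+1) :=
        (Nat.descFactorial_eq_factorial_mul_choose a (n+1)).symm
      have hd : a.descFactorial (n+1) ≤ a ^ (n+1) := Nat.descFactorial_le_pow a (n+1)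
      have h3 : 2 ≤ Nat.factorial (n+1) := by
        have := Nat.self_le_factorial (n+1); omega
      calc 2 * Nat.choose a (n+1) ≤ Nat.factorial (n+1) * Nat.choose a (n+1) :=
            Nat.mul_le_mul h3 le_rfl
        _ = a.descFactorial (n+1) := h1
        _ ≤ a ^ (n+1) := hd
    have hpow : 2 * a ^ n ≤ a ^ (n+1) := by
      rw [pow_succ, mul_comm 2 (a^n)]
      exact Nat.mul_le_mul le_rfl ha
    linarith [ih, hC, hpow]

/-- If `c ≥ s` satisfies the bound `|H| < c·w^{s-1}/(log w)^{s-2}` for every graph `H`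
with `α(H) < s` and `ω(H) ≤ w`, then every `K_{s,t}`-free graph `G` (for `s ≥ t ≥ 2`)
with `ω(G) ≤ w` satisfies `|G| ≤ c·α(G)^t·w^{s-1}/(log w)^{s-2}`. -/
theorem stmt_6 (s t : ℕ) (hts : t ≤ s) (ht : 2 ≤ t) (c : ℝ) (hcs : (s : ℝ) ≤ c)
    (hyp : ∀ (W : Type) [Fintype W] (H : SimpleGraph W) (w : ℝ), 1 < w →
      (∀ T : Finset W, IsStableSet H T → T.card < s) →
      (∀ K : Finset W, H.IsClique (K : Set W) → (K.card : ℝ) ≤ w) →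
      (Fintype.card W : ℝ) < c * w ^ (s - 1) / (Real.logb 2 w) ^ (s - 2))
    (V : Type) [Fintype V] (G : SimpleGraph V) (hfree : KstFree G s t)
    (w : ℝ) (hw : 1 < w)
    (hω : ∀ K : Finset V, G.IsClique (K : Set V) → (K.card : ℝ) ≤ w)
    (a : ℕ) (ha : ∃ S : Finset V, IsStableSet G S ∧ S.card = a)
    (hamax : ∀ T : Finset V, IsStableSet G T → T.card ≤ a) :
    (Fintype.card V : ℝ) ≤ c * a ^ t * w ^ (s - 1) / (Real.logb 2 w) ^ (s - 2) := by
  classical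
  obtain ⟨S, hSstab, hSa⟩ := ha
  have hs2 : 2 ≤ s := ht.trans hts
  set L : ℝ := Real.logb 2 w with hLdef
  have hL0 : 0 < L := Real.logb_pos one_lt_two hw
  have hw0 : (0:ℝ) < w := one_pos.trans hw
  set B : ℝ := c * w ^ (s-1) / L ^ (s-2) with hBdef
  have hc2 : (2:ℝ) ≤ c := le_trans (by exact_mod_cast hs2) hcs
  have hLw : L ≤ w := logb_two_le_self hw.le
  have hB2w : 2 * w ≤ B := by
    have hpL : (0:ℝ) < L ^ (s-2) := pow_pos hL0 _
    rw [hBdef, le_div_iff₀ hpL]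
    have hLe : L ^ (s-2) ≤ w ^ (s-2) := pow_le_pow_left₀ hL0.le hLw _
    have hws : w ^ (s-1) = w ^ (s-2) * w := by
      rw [← pow_succ]; congr 1; omega
    rw [hws]
    have hpw : (0:ℝ) < w ^ (s-2) := pow_pos hw0 _
    have e1 : 2*w*L^(s-2) ≤ 2*w*(w^(s-2)) := by nlinarith
    have e2 : 2*w*(w^(s-2)) ≤ c*(w^(s-2)*w) := by
      have h := mul_le_mul_of_nonneg_right hc2 (le_of_lt (mul_pos hpw hw0))
      linarith
    linarith
  have hB2 : (2:ℝ) ≤ B := by linarith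
  -- key: any vertex set all of whose stable subsets have size < s is small
  have key : ∀ D : Finset V, (∀ T : Finset V, IsStableSet G T → T ⊆ D → T.card < s) →
      ((D.card : ℝ) < B) := by
    intro D hD
    rw [hBdef, hLdef]
    have hmain : (Fintype.card ↥D : ℝ) < c * w ^ (s-1) / (Real.logb 2 w) ^ (s-2) := by
      apply hyp ↥D (G.comap (Subtype.val : ↥D → V)) w hw
      · intro T hT
        have himg : (T.image (Subtype.val : ↥D → V)).card = T.card :=
          Finset.card_image_of_injective _ Subtype.val_injective
        rw [← himg]
        apply hD
        · intro u hu v hv huv hadj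
          obtain ⟨u₀, hu₀, rfl⟩ := Finset.mem_image.mp hu
          obtain ⟨v₀, hv₀, rfl⟩ := Finset.mem_image.mp hv
          have hne : u₀ ≠ v₀ := fun h => huv (by rw [h])
          exact hT hu₀ hv₀ hne hadj
        · intro x hx
          obtain ⟨x₀, _, rfl⟩ := Finset.mem_image.mp hx
          exact x₀.2
      · intro K hK
        have himg : (K.image (Subtype.val : ↥D → V)).card = K.card :=
          Finset.card_image_of_injective _ Subtype.val_injective
        rw [← himg]
        apply hω
        intro x hx y hy hxy
        obtain ⟨x₀, hx₀, rfl⟩ := Finset.mem_image.mp (Finset.mem_coe.mp hx)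
        obtain ⟨y₀, hy₀, rfl⟩ := Finset.mem_image.mp (Finset.mem_coe.mp hy)
        have hne : x₀ ≠ y₀ := fun h => hxy (by rw [h])
        exact hK (Finset.mem_coe.mpr hx₀) (Finset.mem_coe.mpr hy₀) hne
    rwa [Fintype.card_coe] at hmain
  -- the trace of a vertex on S
  let tr : V → Finset V := fun v => S.filter (fun b => G.Adj v b)
  have htrS : ∀ v, tr v ⊆ S := fun v => Finset.filter_subset _ _
  have htr_mem : ∀ v b, b ∈ tr v ↔ (b ∈ S ∧ G.Adj v b) := fun v b => Finset.mem_filter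
  let f : V → Finset V := fun v =>
    if h : t ≤ (tr v).card then (Finset.exists_subset_card_eq (s := tr v) h).choose else tr v
  have hf_pos : ∀ v (h : t ≤ (tr v).card),
      f v = (Finset.exists_subset_card_eq (s := tr v) h).choose := fun v h => dif_pos h
  have hf_neg : ∀ v (h : ¬ t ≤ (tr v).card), f v = tr v := fun v h => dif_neg h
  have hf_sub : ∀ v, f v ⊆ tr v := by
    intro v
    by_cases h : t ≤ (tr v).card
    · rw [hf_pos v h]; exact (Finset.exists_subset_card_eq (s := tr v) h).choose_spec.1
    · rw [hf_neg v h]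
  have hf_card : ∀ v, (f v).card ≤ t := by
    intro v
    by_cases h : t ≤ (tr v).card
    · rw [hf_pos v h]
      exact le_of_eq (Finset.exists_subset_card_eq (s := tr v) h).choose_spec.2
    · rw [hf_neg v h]; omega
  have hf_lt : ∀ v, (f v).card < t → f v = tr v := by
    intro v hlt
    by_cases h : t ≤ (tr v).card
    · exfalso
      rw [hf_pos v h, (Finset.exists_subset_card_eq (s := tr v) h).choose_spec.2] at hlt
      omega
    · exact hf_neg v h
  let D : Finset V := Sᶜ
  have hDmem : ∀ v : V, v ∈ D ↔ v ∉ S := fun v => Finset.mem_compl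
  -- every fiber of f has no stable set of size s
  have fib_small : ∀ F : Finset V, ∀ T : Finset V, IsStableSet G T →
      T ⊆ D.filter (fun v => f v = F) → T.card < s := by
    intro F T hT hTsub
    rcases T.eq_empty_or_nonempty with rfl | ⟨v₀, hv₀⟩
    · simpa using (by omega : 0 < s)
    have hv₀fib := hTsub hv₀
    have hv₀f : f v₀ = F := (Finset.mem_filter.mp hv₀fib).2
    have hTD : ∀ x ∈ T, x ∉ S := fun x hx =>
      (hDmem x).mp (Finset.mem_filter.mp (hTsub hx)).1
    by_cases hFt : F.card = t
    · by_contra hcon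
      push_neg at hcon
      obtain ⟨T', hT'sub, hT'card⟩ := Finset.exists_subset_card_eq (s := T) hcon
      apply hfree
      refine ⟨T', F, ?_, hT'card, hFt, ?_, ?_, ?_⟩
      · rw [Finset.disjoint_left]
        intro x hx hxF
        exact hTD x (hT'sub hx) (htrS v₀ ((hv₀f ▸ hf_sub v₀) hxF))
      · intro u hu v hv huv hadj
        exact hT (hT'sub hu) (hT'sub hv) huv hadj
      · intro u hu v hv huv hadj
        exact hSstab (htrS v₀ ((hv₀f ▸ hf_sub v₀) hu))
          (htrS v₀ ((hv₀f ▸ hf_sub v₀) hv)) huv hadj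
      · intro x hx b hb
        have hxf : f x = F := (Finset.mem_filter.mp (hTsub (hT'sub hx))).2
        have hbx : b ∈ tr x := (hxf ▸ hf_sub x) hb
        exact ((htr_mem x b).mp hbx).2
    · -- in this case every vertex of the fiber has trace exactly F
      have htrF : ∀ x ∈ T, tr x = F := by
        intro x hx
        have hxf : f x = F := (Finset.mem_filter.mp (hTsub hx)).2
        by_cases h : t ≤ (tr x).card
        · exfalso
          apply hFt
          rw [← hxf, hf_pos x h]
          exact (Finset.exists_subset_card_eq (s := tr x) h).choose_spec.2
        · rw [← hxf, hf_neg x h]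
      have hFS : F ⊆ S := (htrF v₀ hv₀) ▸ htrS v₀
      have hFcard : F.card < t := by
        by_cases h : t ≤ (tr v₀).card
        · exfalso
          apply hFt
          rw [← hv₀f, hf_pos v₀ h]
          exact (Finset.exists_subset_card_eq (s := tr v₀) h).choose_spec.2
        · rw [← htrF v₀ hv₀]; omega
      have hdisj : Disjoint T (S \ F) := by
        rw [Finset.disjoint_left]
        intro x hx hxS
        exact hTD x hx (Finset.mem_sdiff.mp hxS).1
      have hstab : IsStableSet G (T ∪ (S \ F)) := by
        intro u hu v hv huv hadj
        rcases Finset.mem_union.mp hu with hu' | hu' <;>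
          rcases Finset.mem_union.mp hv with hv' | hv'
        · exact hT hu' hv' huv hadj
        · have hv'' := Finset.mem_sdiff.mp hv'
          have hmem : v ∈ tr u := Finset.mem_filter.mpr ⟨hv''.1, hadj⟩
          rw [htrF u hu'] at hmem
          exact hv''.2 hmem
        · have hu'' := Finset.mem_sdiff.mp hu'
          have hmem : u ∈ tr v := Finset.mem_filter.mpr ⟨hu''.1, hadj.symm⟩
          rw [htrF v hv'] at hmem
          exact hu''.2 hmem
        · exact hSstab (Finset.mem_sdiff.mp hu').1 (Finset.mem_sdiff.mp hv').1 huv hadj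
      have hle := hamax _ hstab
      rw [Finset.card_union_of_disjoint hdisj, Finset.card_sdiff_of_subset hFS, hSa] at hle
      have hFa : F.card ≤ a := hSa ▸ Finset.card_le_card hFS
      omega
  -- the empty set is not a value of f on D
  have hne_empty : ∀ v ∈ D, f v ≠ ∅ := by
    intro v hv hcon
    have h0 : (f v).card < t := by rw [hcon]; simp; omega
    have htrv : tr v = ∅ := by rw [← hf_lt v h0]; exact hcon
    have hvS : v ∉ S := (hDmem v).mp hv
    have hstab : IsStableSet G (insert v S) := by
      intro x hx y hy hxy hadj
      rcases Finset.mem_insert.mp hx with rfl | hx' <;>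
        rcases Finset.mem_insert.mp hy with rfl | hy'
      · exact hxy rfl
      · have hmem : y ∈ tr x := Finset.mem_filter.mpr ⟨hy', hadj⟩
        rw [htrv] at hmem
        exact Finset.notMem_empty y hmem
      · have hmem : x ∈ tr y := Finset.mem_filter.mpr ⟨hx', hadj.symm⟩
        rw [htrv] at hmem
        exact Finset.notMem_empty x hmem
      · exact hSstab hx' hy' hxy hadj
    have hle := hamax _ hstab
    rw [Finset.card_insert_of_notMem hvS, hSa] at hle
    omega
  -- bound on the number of fibers
  have himgcard : (D.image f).card + 1 ≤ ∑ k ∈ Finset.range (t+1), Nat.choose a k := by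
    have hnotmem : (∅ : Finset V) ∉ D.image f := by
      intro h
      obtain ⟨v, hv, hveq⟩ := Finset.mem_image.mp h
      exact hne_empty v hv hveq
    have hsub : insert ∅ (D.image f) ⊆
        (Finset.range (t+1)).biUnion (fun k => Finset.powersetCard k S) := by
      intro F hF
      rcases Finset.mem_insert.mp hF with rfl | hF'
      · refine Finset.mem_biUnion.mpr ⟨0, by simp, ?_⟩
        rw [Finset.mem_powersetCard]
        exact ⟨Finset.empty_subset _, Finset.card_empty⟩
      · obtain ⟨v, hv, rfl⟩ := Finset.mem_image.mp hF'
        refine Finset.mem_biUnion.mpr ⟨(f v).card,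
          Finset.mem_range.mpr (by have := hf_card v; omega), ?_⟩
        rw [Finset.mem_powersetCard]
        exact ⟨(hf_sub v).trans (htrS v), rfl⟩
    have h1 := Finset.card_le_card hsub
    rw [Finset.card_insert_of_notMem hnotmem] at h1
    calc (D.image f).card + 1
        ≤ ((Finset.range (t+1)).biUnion (fun k => Finset.powersetCard k S)).card := h1
      _ ≤ ∑ k ∈ Finset.range (t+1), (Finset.powersetCard k S).card :=
          Finset.card_biUnion_le
      _ = ∑ k ∈ Finset.range (t+1), Nat.choose a k := by
          apply Finset.sum_congr rfl
          intro k _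
          rw [Finset.card_powersetCard, hSa]
  -- sum over fibers
  have hDsum : (D.card : ℝ) ≤ ((D.image f).card : ℝ) * B := by
    have h1 : D.card = ∑ F ∈ D.image f, (D.filter (fun v => f v = F)).card :=
      Finset.card_eq_sum_card_image f D
    rw [h1]
    push_cast
    calc (∑ F ∈ D.image f, ((D.filter (fun v => f v = F)).card : ℝ))
        ≤ ∑ F ∈ D.image f, B :=
          Finset.sum_le_sum (fun F _ => (key _ (fib_small F)).le)
      _ = ((D.image f).card : ℝ) * B := by rw [Finset.sum_const, nsmul_eq_mul]
  have hcardV : (Fintype.card V : ℝ) ≤ (a : ℝ) + ((D.image f).card : ℝ) * B := by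
    have h1 : S.card + D.card = Fintype.card V := Finset.card_add_card_compl S
    have h2 : (Fintype.card V : ℝ) = (a:ℝ) + (D.card : ℝ) := by
      rw [← h1, hSa]; push_cast; ring
    rw [h2]; linarith
  by_cases h2a : 2 ≤ a
  · have hch := choose_sum_le h2a t ht
    have h3 : a + 2 * (D.image f).card + 2 ≤ 2 * a ^ t + 2 := by
      calc a + 2 * (D.image f).card + 2 = a + 2 * ((D.image f).card + 1) := by ring
        _ ≤ a + 2 * (∑ k ∈ Finset.range (t+1), Nat.choose a k) := by
            have := himgcard; omega
        _ ≤ 2 * a ^ t + 2 := hch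
    have h5 : a + 2 * (D.image f).card ≤ 2 * a ^ t := le_of_add_le_add_right h3
    have hKR : (a:ℝ) + 2 * ((D.image f).card : ℝ) ≤ 2 * (a:ℝ)^t := by
      exact_mod_cast h5
    have hK0 : (0:ℝ) ≤ ((D.image f).card : ℝ) := Nat.cast_nonneg _
    have haR : (2:ℝ) ≤ (a:ℝ) := by exact_mod_cast h2a
    have hfinal : (a:ℝ) + ((D.image f).card : ℝ) * B ≤ (a:ℝ)^t * B := by
      have hp : (0:ℝ) ≤ ((a:ℝ)^t - ((D.image f).card : ℝ)) := by linarith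
      have hq : (0:ℝ) ≤ B - 2 := by linarith
      nlinarith [mul_nonneg hp hq]
    calc (Fintype.card V : ℝ) ≤ (a:ℝ) + ((D.image f).card : ℝ) * B := hcardV
      _ ≤ (a:ℝ)^t * B := hfinal
      _ = c * (a:ℝ)^t * w^(s-1) / L^(s-2) := by rw [hBdef]; ring
  · interval_cases a
    · have hV0 : Fintype.card V = 0 := by
        by_contra h
        have hpos : 0 < Fintype.card V := Nat.pos_of_ne_zero h
        obtain ⟨v⟩ := Fintype.card_pos_iff.mp hpos
        have hstab : IsStableSet G {v} := by
          intro x hx y hy hxy _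
          rw [Finset.mem_singleton] at hx hy
          exact hxy (hx.trans hy.symm)
        have := hamax _ hstab
        simp at this
      rw [hV0]
      push_cast
      rw [zero_pow (show t ≠ 0 by omega)]
      simp
    · have hlt := key Finset.univ (by
        intro T hT _
        have := hamax T hT
        omega)
      rw [Finset.card_univ] at hlt
      calc (Fintype.card V : ℝ) ≤ B := hlt.le
        _ = c * ((1:ℕ):ℝ)^t * w^(s-1) / L^(s-2) := by rw [hBdef]; norm_num
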